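/- Let A be a finite set of integers with minimum element 0, maximum element b, and gcd of its elements equal to 1. Then for every a with 1 ≤ a ≤ b−1, one has N_{a,A} ≤ b − 1. -/

import Mathlib

open Pointwise

/-- The `N`-fold sumset of a finite set `A` (sums of `N` not-necessarily-distinct elements),
with the `0`-fold sumset being `{0}`. -/
def nfold {α : Type*} [AddMonoid α] [DecidableEq α] (A : Finset α) : ℕ → Finset α
  | 0 => {0}
  | n + 1 => nfold A n + A

/-- `postP A` is the set of integers expressible as a finite (nonempty) sum of elements of `A`. -/
def postP (A : Finset ℤ) : Set ℤ := {n | ∃ N : ℕ, 1 ≤ N ∧ n ∈ nfold A N}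

/-- The exceptional set `E(A)`. -/
def postE (A : Finset ℤ) : Set ℤ := {n | 1 ≤ n ∧ n ∉ postP A}

/-- `n_{a,A}`: the least `n ≥ 1` with `n ∈ P(A)` and `n ≡ a (mod b)`. -/
noncomputable def nmin (A : Finset ℤ) (b a : ℤ) : ℤ :=
  sInf {n : ℤ | 1 ≤ n ∧ n ∈ postP A ∧ n % b = a % b}

/-- `N_{a,A}`: the least `N ≥ 1` with `n_{a,A} ∈ NA`. -/
noncomputable def Nmin (A : Finset ℤ) (b a : ℤ) : ℕ :=
  sInf {N : ℕ | 1 ≤ N ∧ nmin A b a ∈ nfold A N}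

/-- `N_A^* = max_{1 ≤ a ≤ b-1} N_{a,A}`. -/
noncomputable def Nstar (A : Finset ℤ) (b : ℤ) : ℕ :=
  (Finset.Icc 1 (b - 1)).sup (fun a => Nmin A b a)


lemma mem_nfold_iff (A : Finset ℤ) (N : ℕ) (n : ℤ) :
    n ∈ nfold A N ↔ ∃ s : Multiset ℤ, Multiset.card s = N ∧ (∀ x ∈ s, x ∈ A) ∧ s.sum = n := by
  induction N generalizing n with
  | zero =>
    simp only [nfold, Finset.mem_singleton]
    constructor
    · rintro rfl; exact ⟨0, by simp⟩
    · rintro ⟨s, hcard, -, hsum⟩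
      rw [Multiset.card_eq_zero] at hcard; subst hcard; simpa using hsum.symm
  | succ N ih =>
    simp only [nfold, Finset.mem_add]
    constructor
    · rintro ⟨y, hy, z, hz, rfl⟩
      obtain ⟨s, hc, hm, hs⟩ := (ih y).1 hy
      refine ⟨z ::ₘ s, by simp [hc], ?_, by simp [hs, add_comm]⟩
      intro x hx
      rcases Multiset.mem_cons.1 hx with rfl | h
      exacts [hz, hm x h]
    · rintro ⟨s, hc, hm, rfl⟩
      have hne : s ≠ 0 := by rintro rfl; simp at hc
      obtain ⟨z, hz⟩ := Multiset.exists_mem_of_ne_zero hne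
      refine ⟨(s.erase z).sum, (ih _).2 ⟨s.erase z, ?_, ?_, rfl⟩, z, hm z hz, ?_⟩
      · rw [Multiset.card_erase_of_mem hz, hc]; rfl
      · intro x hx; exact hm x (Multiset.mem_of_mem_erase hx)
      · rw [add_comm, ← Multiset.sum_cons, Multiset.cons_erase hz]


lemma bezout (A : Finset ℤ) : ∃ c : ℤ → ℤ, ∑ x ∈ A, c x * x = A.gcd id := by
  classical
  induction A using Finset.induction with
  | empty => exact ⟨0, by simp⟩
  | insert _ _ ha =>
    rename_i a s ih0
    obtain ⟨c, hc⟩ := ih0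
    refine ⟨fun x => if x = a then Int.gcdA a (s.gcd id) else Int.gcdB a (s.gcd id) * c x, ?_⟩
    rw [Finset.sum_insert ha, Finset.gcd_insert]
    have h1 : (GCDMonoid.gcd (id a) (s.gcd id) : ℤ)
        = a * Int.gcdA a (s.gcd id) + (s.gcd id) * Int.gcdB a (s.gcd id) := by
      rw [← Int.coe_gcd, Int.gcd_eq_gcd_ab]; rfl
    have h2 : ∑ x ∈ s, (if x = a then Int.gcdA a (s.gcd id) else Int.gcdB a (s.gcd id) * c x) * x
        = Int.gcdB a (s.gcd id) * (s.gcd id) := by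
      rw [← hc, Finset.mul_sum]
      refine Finset.sum_congr rfl fun x hx => ?_
      rw [if_neg (by rintro rfl; exact ha hx), mul_assoc]
    rw [h1]
    simp only [h2, if_pos rfl, if_true]
    ring


lemma sum_ge_len (l : List ℤ) (h : ∀ x ∈ l, 1 ≤ x) : (l.length : ℤ) ≤ l.sum := by
  induction l with
  | nil => simp
  | cons y t ih =>
    simp only [List.length_cons, List.sum_cons, Nat.cast_succ]
    have := h y (by simp)
    have := ih (fun x hx => h x (by simp [hx]))
    linarith

lemma msum_finsum (A : Finset ℤ) (f : ℤ → Multiset ℤ) :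
    (∑ x ∈ A, f x).sum = ∑ x ∈ A, (f x).sum := by
  classical
  induction A using Finset.induction with
  | empty => simp
  | insert _ _ h => rename_i ih; simp [Finset.sum_insert h, ih]


lemma exists_good (A : Finset ℤ) (b : ℤ) (hmin : ∀ a ∈ A, 0 ≤ a)
    (hgcd : A.gcd id = 1) (a : ℤ) (ha1 : 1 ≤ a) (ha2 : a ≤ b - 1) :
    ∃ n : ℤ, 1 ≤ n ∧ n ∈ postP A ∧ n % b = a % b := by
  classical
  obtain ⟨c, hc⟩ := bezout A
  rw [hgcd] at hc
  set Mu : Multiset ℤ := ∑ x ∈ A, Multiset.replicate (c x).toNat x with hMu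
  set Mv : Multiset ℤ := ∑ x ∈ A, Multiset.replicate (-(c x)).toNat x with hMv
  have hmemrep : ∀ (g : ℤ → ℕ) y, y ∈ ∑ x ∈ A, Multiset.replicate (g x) x → y ∈ A := by
    intro g y hy
    rw [Multiset.mem_sum] at hy
    obtain ⟨x, hx, hyx⟩ := hy
    rwa [(Multiset.eq_of_mem_replicate hyx : y = x)]
  have hus : Mu.sum = ∑ x ∈ A, ((c x).toNat : ℤ) * x := by
    rw [hMu, msum_finsum]
    exact Finset.sum_congr rfl fun x _ => by rw [Multiset.sum_replicate, nsmul_eq_mul]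
  have hvs : Mv.sum = ∑ x ∈ A, (((-(c x)).toNat : ℤ)) * x := by
    rw [hMv, msum_finsum]
    exact Finset.sum_congr rfl fun x _ => by rw [Multiset.sum_replicate, nsmul_eq_mul]
  have huv : Mu.sum - Mv.sum = 1 := by
    rw [hus, hvs, ← Finset.sum_sub_distrib, ← hc]
    refine Finset.sum_congr rfl fun x _ => ?_
    have : ((c x).toNat : ℤ) - ((-(c x)).toNat : ℤ) = c x := by omega
    rw [← sub_mul, this]
  have hv0 : 0 ≤ Mv.sum := by
    rw [hvs]
    refine Finset.sum_nonneg fun x hx => mul_nonneg (by positivity) (hmin x hx)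
  set M : Multiset ℤ := a.toNat • Mu + (b - a).toNat • Mv with hM
  have hMA : ∀ y ∈ M, y ∈ A := by
    intro y hy
    rw [hM, Multiset.mem_add] at hy
    rcases hy with hy | hy
    · exact hmemrep _ y (Multiset.mem_of_mem_nsmul hy)
    · exact hmemrep _ y (Multiset.mem_of_mem_nsmul hy)
  have hMsum : M.sum = a + b * Mv.sum := by
    rw [hM, Multiset.sum_add, Multiset.sum_nsmul, Multiset.sum_nsmul,
      nsmul_eq_mul, nsmul_eq_mul, Int.toNat_of_nonneg (by linarith : (0:ℤ) ≤ a),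
      Int.toNat_of_nonneg (by linarith : (0:ℤ) ≤ b - a)]
    have : Mu.sum = 1 + Mv.sum := by linarith
    rw [this]; ring
  have hMcard : 1 ≤ Multiset.card M := by
    have hMune : Mu ≠ 0 := by
      rintro h
      rw [h] at huv
      simp at huv
      linarith
    have : 1 ≤ Multiset.card Mu := by
      rcases Multiset.exists_mem_of_ne_zero hMune with ⟨y, hy⟩
      exact Multiset.card_pos_iff_exists_mem.2 ⟨y, hy⟩
    have ha' : 1 ≤ a.toNat := by omega
    rw [hM, Multiset.card_add, Multiset.card_nsmul]
    calc 1 = 1 * 1 := by ring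
    _ ≤ a.toNat * Multiset.card Mu := Nat.mul_le_mul ha' this
    _ ≤ _ := Nat.le_add_right _ _
  refine ⟨M.sum, ?_, ⟨Multiset.card M, hMcard, (mem_nfold_iff A _ _).2 ⟨M, rfl, hMA, rfl⟩⟩, ?_⟩
  · rw [hMsum]; nlinarith
  · rw [hMsum, Int.add_mul_emod_self_left]

theorem stmt3 (A : Finset ℤ) (b : ℤ)
    (h0 : 0 ∈ A) (hb : b ∈ A)
    (hmin : ∀ a ∈ A, 0 ≤ a) (hmax : ∀ a ∈ A, a ≤ b)
    (hgcd : A.gcd id = 1)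
    (a : ℤ) (ha1 : 1 ≤ a) (ha2 : a ≤ b - 1) :
    (Nmin A b a : ℤ) ≤ b - 1 := by
  classical
  have hb2 : 2 ≤ b := by linarith
  have hSne : Set.Nonempty {n : ℤ | 1 ≤ n ∧ n ∈ postP A ∧ n % b = a % b} :=
    exists_good A b hmin hgcd a ha1 ha2
  have hSbdd : BddBelow {n : ℤ | 1 ≤ n ∧ n ∈ postP A ∧ n % b = a % b} :=
    ⟨1, fun x hx => hx.1⟩
  have hn : nmin A b a ∈ {n : ℤ | 1 ≤ n ∧ n ∈ postP A ∧ n % b = a % b} :=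
    Int.csInf_mem hSne hSbdd
  set n := nmin A b a with hndef
  obtain ⟨hn1, ⟨N0, hN01, hN0mem⟩, hnmod⟩ := hn
  have hTne : Set.Nonempty {N : ℕ | 1 ≤ N ∧ n ∈ nfold A N} := ⟨N0, hN01, hN0mem⟩
  have hN : Nmin A b a ∈ {N : ℕ | 1 ≤ N ∧ n ∈ nfold A N} := Nat.sInf_mem hTne
  set N := Nmin A b a with hNdef
  obtain ⟨hN1, hNmem⟩ := hN
  by_contra hcon
  push_neg at hcon
  have hbN : b ≤ (N : ℤ) := by omega
  obtain ⟨s, hsc, hsA, hssum⟩ := (mem_nfold_iff A N n).1 hNmem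
  -- all elements positive (by minimality of N)
  have hpos : ∀ x ∈ s, 1 ≤ x := by
    intro x hx
    rcases lt_or_ge 0 x with h | h
    · exact h
    have hx0 : x = 0 := le_antisymm h (hmin x (hsA x hx))
    subst hx0
    exfalso
    have hsum' : (s.erase 0).sum = n := by
      have h1 := Multiset.cons_erase hx
      have h2 : s.sum = 0 + (s.erase 0).sum := by
        rw [← Multiset.sum_cons, h1]
      rw [hssum] at h2; linarith
    have hc' : Multiset.card (s.erase 0) = N - 1 := by
      rw [Multiset.card_erase_of_mem hx, hsc]; rfl
    have hN2 : 2 ≤ N := by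
      by_contra h2
      have hNeq : N = 1 := by omega
      have : Multiset.card (s.erase 0) = 0 := by omega
      rw [Multiset.card_eq_zero] at this
      rw [this] at hsum'
      simp at hsum'
      omega
    have hmem : N - 1 ∈ {N : ℕ | 1 ≤ N ∧ n ∈ nfold A N} := by
      refine ⟨by omega, (mem_nfold_iff A _ _).2 ⟨s.erase 0, hc', ?_, hsum'⟩⟩
      intro y hy; exact hsA y (Multiset.mem_of_mem_erase hy)
    have h3 : N ≤ N - 1 := Nat.sInf_le hmem
    omega
  set l := s.toList with hldef
  have hlA : ∀ x ∈ l, x ∈ A := fun x hx => hsA x (by rwa [← Multiset.mem_toList])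
  have hlpos : ∀ x ∈ l, 1 ≤ x := fun x hx => hpos x (by rwa [← Multiset.mem_toList])
  have hllen : l.length = N := by rw [hldef, Multiset.length_toList, hsc]
  have hlsum : l.sum = n := by rw [hldef, Multiset.sum_toList, hssum]
  -- key step
  have key : ∀ i j : ℕ, i < j → j ≤ N →
      (l.take i).sum % b = (l.take j).sum % b → False := by
    intro i j hij hjN hmod
    set d : ℤ := (l.take j).sum - (l.take i).sum with hd
    have hdvd : b ∣ d := Int.ModEq.dvd hmod
    have htj : l.take j = l.take i ++ (l.drop i).take (j - i) := by
      have : j = i + (j - i) := by omega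
      rw [this, List.take_add]
      congr 2
      omega
    have hdsum : d = ((l.drop i).take (j - i)).sum := by
      rw [hd, htj, List.sum_append]; ring
    have hlen2 : ((l.drop i).take (j - i)).length = j - i := by
      rw [List.length_take, List.length_drop, hllen]; omega
    have hd1 : 1 ≤ d := by
      rw [hdsum]
      have h1 : ∀ x ∈ (l.drop i).take (j - i), 1 ≤ x := fun x hx =>
        hlpos x (List.mem_of_mem_drop (List.mem_of_mem_take hx))
      have := sum_ge_len _ h1
      rw [hlen2] at this
      omega
    set r : List ℤ := l.take i ++ l.drop j with hr
    have hrsum : r.sum = n - d := by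
      have h1 : (l.take j).sum + (l.drop j).sum = n := by
        rw [← hlsum, ← List.sum_append, List.take_append_drop]
      rw [hr, List.sum_append]
      omega
    have hrlen : r.length = i + (N - j) := by
      rw [hr, List.length_append, List.length_take, List.length_drop, hllen]
      omega
    rcases Nat.eq_zero_or_pos (i + (N - j)) with h0' | h0'
    · -- i = 0 and j = N : n is a multiple of b, contradiction
      have hi0 : i = 0 := by omega
      have hjN' : j = N := by omega
      have hdn : d = n := by
        rw [hd, hi0, hjN', ← hllen, List.take_length, hlsum]
        simp
      have hnb : n % b = 0 := by
        rw [← hdn]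
        exact Int.emod_eq_zero_of_dvd hdvd
      have hab : a % b = a := Int.emod_eq_of_lt (by linarith) (by linarith)
      rw [hnmod, hab] at hnb
      omega
    · -- shorter representation: contradiction with minimality of n
      have hrA : ∀ y ∈ (↑r : Multiset ℤ), y ∈ A := by
        intro y hy
        rw [Multiset.mem_coe] at hy
        rcases List.mem_append.1 hy with h | h
        exacts [hlA y (List.mem_of_mem_take h), hlA y (List.mem_of_mem_drop h)]
      have hr1 : 1 ≤ r.sum := by
        have h1 : ∀ x ∈ r, 1 ≤ x := by
          intro x hx
          rcases List.mem_append.1 hx with h | h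
          exacts [hlpos x (List.mem_of_mem_take h), hlpos x (List.mem_of_mem_drop h)]
        have := sum_ge_len _ h1
        rw [hrlen] at this
        omega
      have hmem : n - d ∈ {m : ℤ | 1 ≤ m ∧ m ∈ postP A ∧ m % b = a % b} := by
        refine ⟨by omega, ⟨i + (N - j), by omega, (mem_nfold_iff A _ _).2
          ⟨(↑r : Multiset ℤ), by rw [Multiset.coe_card, hrlen], hrA, by
            rw [Multiset.sum_coe, hrsum]⟩⟩, ?_⟩
        obtain ⟨m, hm⟩ := hdvd
        rw [hm, sub_eq_add_neg, ← mul_neg, Int.add_mul_emod_self_left, hnmod]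
      have hle : n ≤ n - d := csInf_le hSbdd hmem
      omega
  -- pigeonhole on partial sums mod b
  have hmaps : ∀ i ∈ Finset.range (N + 1),
      (l.take i).sum % b ∈ Finset.Ico (0 : ℤ) b := by
    intro i _
    rw [Finset.mem_Ico]
    exact ⟨Int.emod_nonneg _ (by omega), Int.emod_lt_of_pos _ (by omega)⟩
  have hcard : (Finset.Ico (0 : ℤ) b).card < (Finset.range (N + 1)).card := by
    rw [Finset.card_range, Int.card_Ico]
    omega
  obtain ⟨i, hi, j, hj, hij, hfeq⟩ :=
    Finset.exists_ne_map_eq_of_card_lt_of_maps_to hcard hmaps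
  rw [Finset.mem_range] at hi hj
  rcases lt_or_gt_of_ne hij with h | h
  · exact key i j h (by omega) hfeq
  · exact key j i h (by omega) hfeq.symm
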